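/- Define a KN tableau of shape λ=(λ1,λ2) (λ1 ≥ λ2 ≥ 0) over the ordered alphabet 1 < 2 < 0 < 2̄ < 1̄ as a filling with rows weakly increasing where 0 does not repeat in a row, columns strictly increasing where 0 may repeat, with 1 and 1̄ never in the same column, and with the configurations [2 above ·; · ; 2̄ in next column second row] and [0 first row; 2̄ second row of next column] forbidden. Then the map T ↦ (b1(T), b2(T), b3(T), b4(T)) — where b1 = 2·#{entries in row 2 that are ≥ 2̄} + #{entries 0 in row 2}, b2 = #{entries in row 1 > 1} + #{entries in row 2 > 2̄}, b3 = 2·#{entries in row 1 ≥ 2̄} + #{entries 0 in row 1}, b4 = #{entries in row 1 > 2̄} — is injective on the set of KN tableaux of shape λ. -/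
import Mathlib


/-- A Kashiwara–Nakashima tableau of `spo(4|1)` of two-row shape
`λ = (m1+m2, m2)`. The alphabet `{1, 2, 0, 2̄, 1̄}` with order `1<2<0<2̄<1̄` is
encoded as `Fin 5` (so `0 ↦ 1`, `1 ↦ 2`, `2 ↦ 0`, `3 ↦ 2̄`, `4 ↦ 1̄`).
Conditions: rows weakly increase and `0` does not repeat in a row; columns
strictly increase except that `0` may repeat; `1` and `1̄` never share a column;
the two forbidden adjacent-column configurations of Definition 3.1(iii):
`2` in row 1 with `2̄` in row 2 of the next column, and `0` in row 1 with `2̄`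
in row 2 of the next column. -/
structure KNTableau (m1 m2 : ℕ) where
  row1 : Fin (m1 + m2) → Fin 5
  row2 : Fin m2 → Fin 5
  mono1 : Monotone row1
  mono2 : Monotone row2
  zeroRow1 : ∀ i j : Fin (m1 + m2), i < j → ¬(row1 i = 2 ∧ row1 j = 2)
  zeroRow2 : ∀ i j : Fin m2, i < j → ¬(row2 i = 2 ∧ row2 j = 2)
  col : ∀ j : Fin m2,
    row1 (Fin.castLE (Nat.le_add_left m2 m1) j) < row2 j ∨
      (row1 (Fin.castLE (Nat.le_add_left m2 m1) j) = 2 ∧ row2 j = 2)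
  noOneOneBar : ∀ j : Fin m2,
    ¬(row1 (Fin.castLE (Nat.le_add_left m2 m1) j) = 0 ∧ row2 j = 4)
  forbidTwo : ∀ j : Fin m2, ∀ h : (j : ℕ) + 1 < m2,
    ¬(row1 (Fin.castLE (Nat.le_add_left m2 m1) j) = 1 ∧ row2 ⟨j + 1, h⟩ = 3)
  forbidZero : ∀ j : Fin m2, ∀ h : (j : ℕ) + 1 < m2,
    ¬(row1 (Fin.castLE (Nat.le_add_left m2 m1) j) = 2 ∧ row2 ⟨j + 1, h⟩ = 3)

namespace KNTableau

variable {m1 m2 : ℕ} (T : KNTableau m1 m2)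

/-- `b1 = 2·#{row-2 entries ≥ 2̄} + #{row-2 entries = 0}`. -/
def b1 : ℕ :=
  2 * (Finset.univ.filter fun j => 3 ≤ T.row2 j).card +
    (Finset.univ.filter fun j => T.row2 j = 2).card

/-- `b2 = #{row-1 entries > 1} + #{row-2 entries > 2̄}`. -/
def b2 : ℕ :=
  (Finset.univ.filter fun i => 0 < T.row1 i).card +
    (Finset.univ.filter fun j => 3 < T.row2 j).card

/-- `b3 = 2·#{row-1 entries ≥ 2̄} + #{row-1 entries = 0}`. -/
def b3 : ℕ :=
  2 * (Finset.univ.filter fun i => 3 ≤ T.row1 i).card +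
    (Finset.univ.filter fun i => T.row1 i = 2).card

/-- `b4 = #{row-1 entries > 2̄}`. -/
def b4 : ℕ :=
  (Finset.univ.filter fun i => 3 < T.row1 i).card

end KNTableau

section cnt
variable {n : ℕ}

/-- number of entries `≥ k`. -/
def cntf (f : Fin n → Fin 5) (k : Fin 5) : ℕ :=
  (Finset.univ.filter fun i => k ≤ f i).card

lemma cntf_le (f : Fin n → Fin 5) (k : Fin 5) : cntf f k ≤ n := by
  classical
  calc cntf f k ≤ Finset.univ.card := Finset.card_filter_le _ _
    _ = n := by simp

lemma cntf_anti (f : Fin n → Fin 5) {k k' : Fin 5} (h : k ≤ k') :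
    cntf f k' ≤ cntf f k := by
  apply Finset.card_le_card
  intro i hi
  simp only [Finset.mem_filter, Finset.mem_univ, true_and] at *
  exact le_trans h hi

lemma cntf_zero (f : Fin n → Fin 5) : cntf f 0 = n := by
  unfold cntf
  rw [Finset.filter_true_of_mem (fun i _ => Fin.zero_le _)]
  simp

lemma cntf_threshold {f : Fin n → Fin 5} (hf : Monotone f) (k : Fin 5) (i : Fin n) :
    k ≤ f i ↔ n - cntf f k ≤ (i : ℕ) := by
  classical
  constructor
  · intro h
    have hsub : Finset.Ici i ⊆ Finset.univ.filter fun j => k ≤ f j := by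
      intro j hj
      simp only [Finset.mem_Ici] at hj
      simp only [Finset.mem_filter, Finset.mem_univ, true_and]
      exact le_trans h (hf hj)
    have hcard := Finset.card_le_card hsub
    rw [Fin.card_Ici] at hcard
    have := i.isLt
    unfold cntf
    omega
  · intro h
    by_contra hk
    have hsub : (Finset.univ.filter fun j => k ≤ f j) ⊆ Finset.Ioi i := by
      intro j hj
      simp only [Finset.mem_filter, Finset.mem_univ, true_and] at hj
      simp only [Finset.mem_Ioi]
      by_contra hji
      push_neg at hji
      exact hk (le_trans hj (hf hji))
    have hcard := Finset.card_le_card hsub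
    rw [Fin.card_Ioi] at hcard
    have := i.isLt
    unfold cntf at h
    omega

lemma mono_eq_of_cntf_eq {f g : Fin n → Fin 5} (hf : Monotone f) (hg : Monotone g)
    (h : ∀ k, cntf f k = cntf g k) : f = g := by
  funext i
  apply le_antisymm
  · rw [cntf_threshold hg (f i) i, ← h, ← cntf_threshold hf (f i) i]
  · rw [cntf_threshold hf (g i) i, h, ← cntf_threshold hg (g i) i]

lemma split_two (f : Fin n → Fin 5) :
    cntf f 2 = cntf f 3 + (Finset.univ.filter fun i => f i = 2).card := by
  classical
  unfold cntf
  rw [← Finset.card_union_of_disjoint]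
  · congr 1
    ext i
    simp only [Finset.mem_union, Finset.mem_filter, Finset.mem_univ, true_and]
    have : ∀ x : Fin 5, 2 ≤ x ↔ (3 ≤ x ∨ x = 2) := by decide
    exact this (f i)
  · rw [Finset.disjoint_left]
    intro i hi hi'
    simp only [Finset.mem_filter, Finset.mem_univ, true_and] at hi hi'
    rw [hi'] at hi
    exact absurd hi (by decide)

lemma two_card_le_one (f : Fin n → Fin 5)
    (hz : ∀ i j : Fin n, i < j → ¬(f i = 2 ∧ f j = 2)) :
    (Finset.univ.filter fun i => f i = 2).card ≤ 1 := by
  classical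
  rw [Finset.card_le_one]
  intro i hi j hj
  simp only [Finset.mem_filter, Finset.mem_univ, true_and] at hi hj
  by_contra hne
  rcases lt_or_gt_of_ne hne with hlt | hlt
  · exact hz i j hlt ⟨hi, hj⟩
  · exact hz j i hlt ⟨hj, hi⟩

lemma card_pos_eq (f : Fin n → Fin 5) :
    (Finset.univ.filter fun i => 0 < f i).card = cntf f 1 := by
  unfold cntf
  congr 1

lemma card_gt_eq (f : Fin n → Fin 5) :
    (Finset.univ.filter fun i => 3 < f i).card = cntf f 4 := by
  unfold cntf
  congr 1

end cnt

lemma KNTableau.ext' {m1 m2 : ℕ} (T T' : KNTableau m1 m2)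
    (h1 : T.row1 = T'.row1) (h2 : T.row2 = T'.row2) : T = T' := by
  cases T; cases T'; cases h1; cases h2; rfl
section key
open KNTableau
variable {m1 m2 : ℕ}

lemma row2_pos (T : KNTableau m1 m2) (j : Fin m2) : (1 : Fin 5) ≤ T.row2 j := by
  rcases T.col j with h | ⟨_, h⟩
  · exact lt_of_le_of_lt (Fin.zero_le _) h
  · rw [h]; decide

lemma cntf_row2_one (T : KNTableau m1 m2) : cntf T.row2 1 = m2 := by
  unfold cntf
  rw [Finset.filter_true_of_mem (fun j _ => row2_pos T j)]
  simp

/-- lower bound: if row 2 contains a `1̄` then `A1 ≥ m1 + B4`. -/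
lemma lb (T : KNTableau m1 m2) (h : 1 ≤ cntf T.row2 4) :
    m1 + cntf T.row2 4 ≤ cntf T.row1 1 := by
  set B4 := cntf T.row2 4 with hB4
  have hB4le : B4 ≤ m2 := cntf_le _ _
  have hjlt : m2 - B4 < m2 := by omega
  set j : Fin m2 := ⟨m2 - B4, hjlt⟩ with hj
  have h4 : (4 : Fin 5) ≤ T.row2 j := by
    rw [cntf_threshold T.mono2 4 j]
  have h4' : T.row2 j = 4 := by
    have hlt := (T.row2 j).isLt
    have h4v := Fin.le_def.1 h4
    exact Fin.ext (by simp at h4v ⊢; omega)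
  have h1 : T.row1 (Fin.castLE (Nat.le_add_left m2 m1) j) ≠ 0 := by
    intro h0
    exact T.noOneOneBar j ⟨h0, h4'⟩
  have h1' : (1 : Fin 5) ≤ T.row1 (Fin.castLE (Nat.le_add_left m2 m1) j) :=
    Fin.pos_of_ne_zero h1
  rw [cntf_threshold T.mono1 1] at h1'
  simp only [Fin.coe_castLE] at h1'
  have hA1le : cntf T.row1 1 ≤ m1 + m2 := cntf_le _ _
  have hjv : (j : ℕ) = m2 - B4 := rfl
  omega

/-- upper bound: if row 2 contains a `2̄` then `A1 ≤ m1 + B4 + 1`. -/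
lemma ub (T : KNTableau m1 m2) (h : cntf T.row2 4 < cntf T.row2 3) :
    cntf T.row1 1 ≤ m1 + cntf T.row2 4 + 1 := by
  set B4 := cntf T.row2 4 with hB4
  set B3 := cntf T.row2 3 with hB3
  have hB3le : B3 ≤ m2 := cntf_le _ _
  have hA1le : cntf T.row1 1 ≤ m1 + m2 := cntf_le _ _
  by_cases hm : m2 = B4 + 1
  · omega
  · have hm2 : B4 + 2 ≤ m2 := by omega
    have hplt : m2 - B4 - 1 < m2 := by omega
    set p : Fin m2 := ⟨m2 - B4 - 1, hplt⟩ with hp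
    have h3 : (3 : Fin 5) ≤ T.row2 p := by
      rw [cntf_threshold T.mono2 3]
      simp only [hp]
      omega
    have h4 : ¬ (4 : Fin 5) ≤ T.row2 p := by
      rw [cntf_threshold T.mono2 4]
      simp only [hp]
      omega
    have h3' : T.row2 p = 3 := by
      have hlt := (T.row2 p).isLt
      have h3v := Fin.le_def.1 h3
      have h4v : ¬ (4 : ℕ) ≤ ((T.row2 p : Fin 5) : ℕ) := fun hc => h4 (Fin.le_def.2 (by simpa using hc))
      exact Fin.ext (by simp at h3v h4v ⊢; omega)
    have hcolp : ((T.row1 (Fin.castLE (Nat.le_add_left m2 m1) p)) : ℕ) ≤ 2 := by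
      rcases T.col p with hlt | ⟨_, h2⟩
      · have := Fin.lt_def.1 hlt
        rw [h3'] at this
        simp at this
        omega
      · rw [h3'] at h2; exact absurd h2 (by decide)
    have hqlt : m2 - B4 - 2 < m2 := by omega
    set q : Fin m2 := ⟨m2 - B4 - 2, hqlt⟩ with hq
    have hq1 : (q : ℕ) + 1 < m2 := by simp only [hq]; omega
    have hqp : (⟨(q : ℕ) + 1, hq1⟩ : Fin m2) = p := Fin.ext (by simp only [hq, hp]; omega)
    have hf2 := T.forbidTwo q hq1
    have hf0 := T.forbidZero q hq1
    rw [hqp, h3'] at hf2 hf0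
    have hne1 : T.row1 (Fin.castLE (Nat.le_add_left m2 m1) q) ≠ 1 := fun hc => hf2 ⟨hc, rfl⟩
    have hne2 : T.row1 (Fin.castLE (Nat.le_add_left m2 m1) q) ≠ 2 := fun hc => hf0 ⟨hc, rfl⟩
    have hmono : T.row1 (Fin.castLE (Nat.le_add_left m2 m1) q)
        ≤ T.row1 (Fin.castLE (Nat.le_add_left m2 m1) p) := by
      apply T.mono1
      simp only [Fin.le_def, Fin.coe_castLE, hq, hp]
      omega
    have hq0 : T.row1 (Fin.castLE (Nat.le_add_left m2 m1) q) = 0 := by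
      have hv := Fin.le_def.1 hmono
      have h1v : ((T.row1 (Fin.castLE (Nat.le_add_left m2 m1) q)) : ℕ) ≠ 1 := by
        intro hc; exact hne1 (Fin.ext (by simpa using hc))
      have h2v : ((T.row1 (Fin.castLE (Nat.le_add_left m2 m1) q)) : ℕ) ≠ 2 := by
        intro hc; exact hne2 (Fin.ext (by simpa using hc))
      exact Fin.ext (by simp; omega)
    have hnot : ¬ (1 : Fin 5) ≤ T.row1 (Fin.castLE (Nat.le_add_left m2 m1) q) := by
      rw [hq0]; decide
    rw [cntf_threshold T.mono1 1] at hnot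
    simp only [Fin.coe_castLE, hq] at hnot
    omega

lemma noswap (T T' : KNTableau m1 m2)
    (hB3 : cntf T.row2 3 = cntf T'.row2 3)
    (hb2 : cntf T.row1 1 + cntf T.row2 4 = cntf T'.row1 1 + cntf T'.row2 4)
    (hlt : cntf T.row2 4 < cntf T'.row2 4) : False := by
  have hlb := lb T' (by omega)
  have hB4'le : cntf T'.row2 4 ≤ cntf T'.row2 3 := cntf_anti _ (by decide)
  have hub := ub T (by omega)
  omega

end key
open KNTableau in
/-- The statistics map `T ↦ (b1, b2, b3, b4)` is injective on KN tableaux of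
shape `(m1+m2, m2)`. -/
theorem knTableau_stats_injective (m1 m2 : ℕ) :
    Function.Injective (fun T : KNTableau m1 m2 => (b1 T, b2 T, b3 T, b4 T)) := by
  classical
  intro T T' heq
  simp only [Prod.mk.injEq] at heq
  obtain ⟨h1, h2, h3, h4⟩ := heq
  simp only [KNTableau.b1, KNTableau.b2, KNTableau.b3, KNTableau.b4] at h1 h2 h3 h4
  rw [card_pos_eq, card_pos_eq, card_gt_eq, card_gt_eq] at h2
  rw [card_gt_eq, card_gt_eq] at h4
  have e3 : ∀ (S : KNTableau m1 m2), (Finset.univ.filter fun i => 3 ≤ S.row1 i).card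
      = cntf S.row1 3 := fun _ => rfl
  have e3' : ∀ (S : KNTableau m1 m2), (Finset.univ.filter fun j => 3 ≤ S.row2 j).card
      = cntf S.row2 3 := fun _ => rfl
  rw [e3, e3] at h3
  rw [e3', e3'] at h1
  -- row 1 thresholds 2,3 from b3
  have hs := split_two T.row1
  have hs' := split_two T'.row1
  have hle := two_card_le_one T.row1 T.zeroRow1
  have hle' := two_card_le_one T'.row1 T'.zeroRow1
  have hA3 : cntf T.row1 3 = cntf T'.row1 3 := by omega
  have hA2 : cntf T.row1 2 = cntf T'.row1 2 := by omega
  -- row 2 thresholds 2,3 from b1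
  have ht := split_two T.row2
  have ht' := split_two T'.row2
  have htle := two_card_le_one T.row2 T.zeroRow2
  have htle' := two_card_le_one T'.row2 T'.zeroRow2
  have hB3 : cntf T.row2 3 = cntf T'.row2 3 := by omega
  have hB2 : cntf T.row2 2 = cntf T'.row2 2 := by omega
  -- row 2 threshold 4
  have hB4 : cntf T.row2 4 = cntf T'.row2 4 := by
    rcases lt_trichotomy (cntf T.row2 4) (cntf T'.row2 4) with hlt | heq | hgt
    · exact absurd (noswap T T' hB3 h2 hlt) not_false
    · exact heq
    · exact absurd (noswap T' T hB3.symm h2.symm hgt) not_false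
  have hA1 : cntf T.row1 1 = cntf T'.row1 1 := by omega
  apply KNTableau.ext'
  · apply mono_eq_of_cntf_eq T.mono1 T'.mono1
    intro k
    fin_cases k
    · exact (cntf_zero T.row1).trans (cntf_zero T'.row1).symm
    · exact hA1
    · exact hA2
    · exact hA3
    · exact h4
  · apply mono_eq_of_cntf_eq T.mono2 T'.mono2
    intro k
    fin_cases k
    · exact (cntf_zero T.row2).trans (cntf_zero T'.row2).symm
    · exact (cntf_row2_one T).trans (cntf_row2_one T').symm
    · exact hB2
    · exact hB3
    · exact hB4
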